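/- Let X be a random vector in R^D with E||X||_2² ≤ M, let V_d be a fixed D×d matrix with orthonormal columns, and let V̂_d be a random D×d matrix with orthonormal columns, independent of X, satisfying E||V̂_d V̂_d^T − V_d V_d^T||_F² ≤ 4M²/(δ_d² n) for some δ_d > 0 and n ≥ 1. Let Z ~ N(0, σ²I_D) be independent of (X, V̂_d). Then W₂(V̂_d V̂_d^T X + Z, V_d V_d^T X + Z) ≤ 2M^{3/2}·δ_d^{-1}·n^{-1/2}. -/

import Mathlib

open MeasureTheory ProbabilityTheory Real
open scoped ENNReal NNReal RealInnerProductSpace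

noncomputable section

/-- The isotropic Gaussian measure `N(0, σ²I_D)` on `ℝ^D`. -/
def stdGaussian (D : ℕ) (σ : ℝ) : Measure (EuclideanSpace ℝ (Fin D)) :=
  (Measure.pi fun _ : Fin D => gaussianReal 0 ⟨σ ^ 2, sq_nonneg σ⟩).map
    (MeasurableEquiv.toLp 2 (Fin D → ℝ))

/-- Differential entropy `h(μ) = -∫ p log p` of a measure on `ℝ^D`
(with `p` the density w.r.t. Lebesgue measure). -/
def diffEntropy {D : ℕ} (μ : Measure (EuclideanSpace ℝ (Fin D))) : ℝ :=
  -∫ x, (μ.rnDeriv volume x).toReal * Real.log (μ.rnDeriv volume x).toReal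

/-- The 2-Wasserstein distance `W₂(μ,ν) = (inf over couplings of E‖A-B‖²)^(1/2)`. -/
def W2 {D : ℕ} (μ ν : Measure (EuclideanSpace ℝ (Fin D))) : ℝ :=
  Real.sqrt (sInf {r : ℝ |
    ∃ γ : Measure (EuclideanSpace ℝ (Fin D) × EuclideanSpace ℝ (Fin D)),
      IsProbabilityMeasure γ ∧ γ.map Prod.fst = μ ∧ γ.map Prod.snd = ν ∧
      r = ∫ p, ‖p.1 - p.2‖ ^ 2 ∂γ})

/-- The `D × D` projection matrix `V Vᵀ` associated with columns `V_1,...,V_d`. -/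
def projMatrix {D d : ℕ} (V : Fin d → EuclideanSpace ℝ (Fin D)) : Matrix (Fin D) (Fin D) ℝ :=
  Matrix.of fun i k => ∑ j, V j i * V j k

/-- Squared Frobenius norm of a matrix. -/
def frobSq {D : ℕ} (A : Matrix (Fin D) (Fin D) ℝ) : ℝ := ∑ i, ∑ k, (A i k) ^ 2

lemma euclid_norm_sq {D : ℕ} (x : EuclideanSpace ℝ (Fin D)) : ‖x‖ ^ 2 = ∑ i, x i ^ 2 := by
  rw [EuclideanSpace.norm_eq, Real.sq_sqrt (by positivity)]
  simp [sq_abs]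

lemma sum_eucl_apply {D : ℕ} {ι : Type*} (s : Finset ι) (f : ι → EuclideanSpace ℝ (Fin D))
    (i : Fin D) : (∑ j ∈ s, f j) i = ∑ j ∈ s, f j i := by
  classical
  induction s using Finset.induction with
  | empty => rfl
  | insert _ _ h ih => rw [Finset.sum_insert h, Finset.sum_insert h, PiLp.add_apply, ih]

lemma proj_apply {D d : ℕ} (V : Fin d → EuclideanSpace ℝ (Fin D)) (x : EuclideanSpace ℝ (Fin D))
    (i : Fin D) : (∑ j, ⟪V j, x⟫ • V j) i = ∑ k, projMatrix V i k * x k := by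
  rw [sum_eucl_apply]
  simp only [PiLp.smul_apply, smul_eq_mul, PiLp.inner_apply, RCLike.inner_apply, conj_trivial]
  unfold projMatrix
  simp only [Matrix.of_apply]
  have h1 : ∀ j : Fin d, (∑ k, x k * V j k) * V j i = ∑ k, V j i * V j k * x k := by
    intro j; rw [Finset.sum_mul]; exact Finset.sum_congr rfl fun k _ => by ring
  rw [Finset.sum_congr rfl fun j _ => h1 j, Finset.sum_comm]
  exact Finset.sum_congr rfl fun k _ => (Finset.sum_mul _ _ _).symm

lemma key_bound {D d : ℕ} (V W : Fin d → EuclideanSpace ℝ (Fin D)) (x : EuclideanSpace ℝ (Fin D)) :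
    ‖(∑ j, ⟪V j, x⟫ • V j) - (∑ j, ⟪W j, x⟫ • W j)‖ ^ 2
      ≤ frobSq (projMatrix V - projMatrix W) * ‖x‖ ^ 2 := by
  rw [euclid_norm_sq, euclid_norm_sq, frobSq, Finset.sum_mul]
  refine Finset.sum_le_sum fun i _ => ?_
  have hco : ((∑ j, ⟪V j, x⟫ • V j) - (∑ j, ⟪W j, x⟫ • W j)) i
      = ∑ k, (projMatrix V - projMatrix W) i k * x k := by
    simp only [PiLp.sub_apply, proj_apply, Matrix.sub_apply, sub_mul, Finset.sum_sub_distrib]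
  rw [hco]
  exact Finset.sum_mul_sq_le_sq_mul_sq _ _ _

lemma entry_abs_le {D d : ℕ} (V : Fin d → EuclideanSpace ℝ (Fin D)) (hV : Orthonormal ℝ V)
    (i k : Fin D) : |projMatrix V i k| ≤ d := by
  have h1 : ∀ j (i : Fin D), |V j i| ≤ 1 := by
    intro j i
    rw [← sq_le_one_iff_abs_le_one]
    have hn : ‖V j‖ = 1 := hV.1 j
    have h2 : ∑ l, V j l ^ 2 = 1 := by rw [← euclid_norm_sq, hn]; norm_num
    calc V j i ^ 2 ≤ ∑ l, V j l ^ 2 :=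
          Finset.single_le_sum (f := fun l => V j l ^ 2) (fun l _ => sq_nonneg _)
            (Finset.mem_univ i)
      _ = 1 := h2
  show |∑ j, V j i * V j k| ≤ (d : ℝ)
  calc |∑ j, V j i * V j k| ≤ ∑ j, |V j i * V j k| :=
        Finset.abs_sum_le_sum_abs (fun j => V j i * V j k) Finset.univ
    _ ≤ ∑ _j : Fin d, (1 : ℝ) := Finset.sum_le_sum fun j _ => by
        rw [abs_mul]
        exact mul_le_one₀ (h1 j i) (abs_nonneg _) (h1 j k)
    _ = d := by simp

lemma frobSq_nonneg {D : ℕ} (A : Matrix (Fin D) (Fin D) ℝ) : 0 ≤ frobSq A := by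
  unfold frobSq; positivity

lemma frobSq_diff_le {D d : ℕ} (V W : Fin d → EuclideanSpace ℝ (Fin D))
    (hV : Orthonormal ℝ V) (hW : Orthonormal ℝ W) :
    frobSq (projMatrix V - projMatrix W) ≤ D ^ 2 * (2 * d) ^ 2 := by
  unfold frobSq
  calc ∑ i, ∑ k, ((projMatrix V - projMatrix W) i k) ^ 2
      ≤ ∑ _i : Fin D, ∑ _k : Fin D, ((2 * (d : ℝ))) ^ 2 := by
        refine Finset.sum_le_sum fun i _ => Finset.sum_le_sum fun k _ => ?_
        have h1 := entry_abs_le V hV i k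
        have h2 := entry_abs_le W hW i k
        have h3 : |(projMatrix V - projMatrix W) i k| ≤ 2 * d := by
          rw [Matrix.sub_apply]
          calc |projMatrix V i k - projMatrix W i k|
              ≤ |projMatrix V i k| + |projMatrix W i k| := abs_sub _ _
            _ ≤ 2 * d := by linarith
        exact sq_le_sq' (by linarith [(abs_le.1 h3).1]) (abs_le.1 h3).2
      _ ≤ D ^ 2 * (2 * d) ^ 2 := by
        simp only [Finset.sum_const, Finset.card_univ, Fintype.card_fin, nsmul_eq_mul]
        nlinarith [sq_nonneg ((D:ℝ) - 1), sq_nonneg (2*(d:ℝ))]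

/-- under `E‖V̂_dV̂_dᵀ − V_dV_dᵀ‖_F² ≤ 4M²/(δ_d² n)`, with `V̂_d` independent of
`X`, `E‖X‖² ≤ M` and `Z ~ N(0,σ²I_D)` independent of `(X,V̂_d)`,
`W₂(V̂_dV̂_dᵀX + Z, V_dV_dᵀX + Z) ≤ 2M^{3/2} δ_d⁻¹ n^{-1/2}`. -/
theorem wasserstein_estimated_projection_rate
    {D d : ℕ} {Ω : Type*} [MeasurableSpace Ω] (P : Measure Ω) [IsProbabilityMeasure P]
    (X Z : Ω → EuclideanSpace ℝ (Fin D)) (hX : Measurable X) (hZ : Measurable Z)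
    (M : ℝ) (hX2 : Integrable (fun ω => ‖X ω‖ ^ 2) P) (hM : ∫ ω, ‖X ω‖ ^ 2 ∂P ≤ M)
    (Vd : Fin d → EuclideanSpace ℝ (Fin D)) (hVdON : Orthonormal ℝ Vd)
    (Vhat : Ω → Fin d → EuclideanSpace ℝ (Fin D)) (hVhatMeas : Measurable Vhat)
    (hVhatON : ∀ ω, Orthonormal ℝ (Vhat ω))
    (hVhatX : IndepFun Vhat X P)
    (δd : ℝ) (hδd : 0 < δd) (n : ℕ) (hn : 1 ≤ n)
    (hFrob : ∫ ω, frobSq (projMatrix (Vhat ω) - projMatrix Vd) ∂P ≤ 4 * M ^ 2 / (δd ^ 2 * n))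
    (σ : ℝ) (hσ : 0 < σ) (hZlaw : P.map Z = stdGaussian D σ)
    (hZindep : IndepFun (fun ω => (X ω, Vhat ω)) Z P) :
    W2 (P.map fun ω => (∑ j, ⟪Vhat ω j, X ω⟫ • Vhat ω j) + Z ω)
       (P.map fun ω => (∑ j, ⟪Vd j, X ω⟫ • Vd j) + Z ω)
      ≤ 2 * M ^ ((3 : ℝ) / 2) * δd⁻¹ * (n : ℝ) ^ (-(1 : ℝ) / 2) := by
  classical
  have hn0 : (0:ℝ) < (n:ℝ) := by exact_mod_cast Nat.lt_of_lt_of_le Nat.zero_lt_one hn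
  have hMX0 : 0 ≤ ∫ ω, ‖X ω‖ ^ 2 ∂P := integral_nonneg fun ω => by positivity
  have hM0 : 0 ≤ M := le_trans hMX0 hM
  set A : Ω → EuclideanSpace ℝ (Fin D) :=
    fun ω => (∑ j, ⟪Vhat ω j, X ω⟫ • Vhat ω j) + Z ω with hAdef
  set B : Ω → EuclideanSpace ℝ (Fin D) :=
    fun ω => (∑ j, ⟪Vd j, X ω⟫ • Vd j) + Z ω with hBdef
  have hVj : ∀ j, Measurable fun ω => Vhat ω j := fun j => (measurable_pi_apply j).comp hVhatMeas
  have hmA : Measurable A := by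
    apply Measurable.add _ hZ
    exact Finset.measurable_sum _ fun j _ => (((hVj j).inner hX).smul (hVj j) :
      Measurable ((fun ω => ⟪Vhat ω j, X ω⟫) • fun ω => Vhat ω j))
  have hmB : Measurable B := by
    apply Measurable.add _ hZ
    exact Finset.measurable_sum _ fun j _ => ((measurable_const.inner hX).smul measurable_const :
      Measurable ((fun ω => ⟪Vd j, X ω⟫) • fun _ => Vd j))
  have hpair : Measurable fun ω => (A ω, B ω) := hmA.prodMk hmB
  have hcoord : ∀ (i : Fin D), Measurable fun y : EuclideanSpace ℝ (Fin D) => y i :=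
    fun i => (measurable_pi_apply i).comp (MeasurableEquiv.toLp 2 (Fin D → ℝ)).symm.measurable
  set Fv : (Fin d → EuclideanSpace ℝ (Fin D)) → ℝ :=
    fun v => frobSq (projMatrix v - projMatrix Vd) with hFvdef
  have hFvMeas : Measurable Fv := by
    have hFveq : Fv = fun v => ∑ i, ∑ k, ((∑ j, (v j) i * (v j) k) - projMatrix Vd i k) ^ 2 := by
      funext v
      simp only [hFvdef, frobSq, projMatrix, Matrix.sub_apply, Matrix.of_apply]
    rw [hFveq]
    refine Finset.measurable_sum _ fun i _ => Finset.measurable_sum _ fun k _ => ?_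
    refine Measurable.pow_const (Measurable.sub ?_ measurable_const) 2
    refine Finset.measurable_sum _ fun j _ => ?_
    exact ((hcoord i).comp (measurable_pi_apply j)).mul ((hcoord k).comp (measurable_pi_apply j))
  have hFmeasω : Measurable fun ω => Fv (Vhat ω) := hFvMeas.comp hVhatMeas
  have hNmeas : Measurable fun x : EuclideanSpace ℝ (Fin D) => ‖x‖ ^ 2 :=
    measurable_norm.pow_const 2
  have hindep2 : IndepFun (Fv ∘ Vhat) ((fun x => ‖x‖ ^ 2) ∘ X) P :=
    hVhatX.comp hFvMeas hNmeas
  have hF0 : ∀ ω, 0 ≤ Fv (Vhat ω) := fun ω => frobSq_nonneg _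
  have hFbound : ∀ ω, Fv (Vhat ω) ≤ (D:ℝ) ^ 2 * (2 * d) ^ 2 :=
    fun ω => frobSq_diff_le _ _ (hVhatON ω) hVdON
  have hnormb : ∀ ω, ‖Fv (Vhat ω)‖ ≤ (D:ℝ) ^ 2 * (2 * d) ^ 2 := fun ω => by
    rw [Real.norm_eq_abs, abs_of_nonneg (hF0 ω)]; exact hFbound ω
  have hFXint : Integrable (fun ω => Fv (Vhat ω) * ‖X ω‖ ^ 2) P :=
    hX2.bdd_mul hFmeasω.aestronglyMeasurable (Filter.Eventually.of_forall hnormb)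
  have hdiff : ∀ ω, ‖A ω - B ω‖ ^ 2 ≤ Fv (Vhat ω) * ‖X ω‖ ^ 2 := by
    intro ω
    have hAB : A ω - B ω
        = (∑ j, ⟪Vhat ω j, X ω⟫ • Vhat ω j) - (∑ j, ⟪Vd j, X ω⟫ • Vd j) :=
      add_sub_add_right_eq_sub _ _ _
    rw [hAB]
    exact key_bound _ _ _
  have hABint : Integrable (fun ω => ‖A ω - B ω‖ ^ 2) P := by
    refine hFXint.mono' ((hmA.sub hmB).norm.pow_const 2).aestronglyMeasurable ?_
    exact Filter.Eventually.of_forall fun ω => by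
      rw [Real.norm_eq_abs, abs_of_nonneg (by positivity)]; exact hdiff ω
  have hFrob' : ∫ ω, Fv (Vhat ω) ∂P ≤ 4 * M ^ 2 / (δd ^ 2 * n) := hFrob
  have hr : ∫ ω, ‖A ω - B ω‖ ^ 2 ∂P ≤ 4 * M ^ 3 / (δd ^ 2 * n) := by
    have h1 : ∫ ω, ‖A ω - B ω‖ ^ 2 ∂P ≤ ∫ ω, Fv (Vhat ω) * ‖X ω‖ ^ 2 ∂P :=
      integral_mono hABint hFXint hdiff
    have h2 : ∫ ω, Fv (Vhat ω) * ‖X ω‖ ^ 2 ∂P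
        = (∫ ω, Fv (Vhat ω) ∂P) * ∫ ω, ‖X ω‖ ^ 2 ∂P := by
      have := hindep2.integral_mul_eq_mul_integral hFmeasω.aestronglyMeasurable
        ((hX.norm.pow_const 2)).aestronglyMeasurable
      simpa [Function.comp, Pi.mul_apply] using this
    have hF0' : 0 ≤ ∫ ω, Fv (Vhat ω) ∂P := integral_nonneg hF0
    have h3 : (∫ ω, Fv (Vhat ω) ∂P) * (∫ ω, ‖X ω‖ ^ 2 ∂P) ≤ (4 * M ^ 2 / (δd ^ 2 * n)) * M :=
      mul_le_mul hFrob' hM hMX0 (by positivity)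
    have h4 : (4 * M ^ 2 / (δd ^ 2 * n)) * M = 4 * M ^ 3 / (δd ^ 2 * n) := by ring
    linarith [h1, h2 ▸ h1]
  -- the coupling
  have hmem : (∫ ω, ‖A ω - B ω‖ ^ 2 ∂P) ∈ {r : ℝ |
      ∃ γ : Measure (EuclideanSpace ℝ (Fin D) × EuclideanSpace ℝ (Fin D)),
        IsProbabilityMeasure γ ∧ γ.map Prod.fst = P.map A ∧ γ.map Prod.snd = P.map B ∧
        r = ∫ p, ‖p.1 - p.2‖ ^ 2 ∂γ} := by
    refine ⟨P.map (fun ω => (A ω, B ω)), Measure.isProbabilityMeasure_map hpair.aemeasurable, ?_, ?_, ?_⟩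
    · rw [Measure.map_map measurable_fst hpair]; rfl
    · rw [Measure.map_map measurable_snd hpair]; rfl
    · rw [integral_map hpair.aemeasurable
        (show Measurable fun p :
          EuclideanSpace ℝ (Fin D) × EuclideanSpace ℝ (Fin D) => ‖p.1 - p.2‖ ^ 2 from
          (measurable_fst.sub measurable_snd).norm.pow_const 2).aestronglyMeasurable]
  have hBdd : BddBelow {r : ℝ |
      ∃ γ : Measure (EuclideanSpace ℝ (Fin D) × EuclideanSpace ℝ (Fin D)),
        IsProbabilityMeasure γ ∧ γ.map Prod.fst = P.map A ∧ γ.map Prod.snd = P.map B ∧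
        r = ∫ p, ‖p.1 - p.2‖ ^ 2 ∂γ} := by
    refine ⟨0, fun r hr => ?_⟩
    obtain ⟨γ, _, _, _, hreq⟩ := hr
    rw [hreq]
    exact integral_nonneg fun p => by positivity
  have hsInf : sInf {r : ℝ |
      ∃ γ : Measure (EuclideanSpace ℝ (Fin D) × EuclideanSpace ℝ (Fin D)),
        IsProbabilityMeasure γ ∧ γ.map Prod.fst = P.map A ∧ γ.map Prod.snd = P.map B ∧
        r = ∫ p, ‖p.1 - p.2‖ ^ 2 ∂γ} ≤ 4 * M ^ 3 / (δd ^ 2 * n) :=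
    le_trans (csInf_le hBdd hmem) hr
  have hRHS0 : 0 ≤ 2 * M ^ ((3 : ℝ) / 2) * δd⁻¹ * (n : ℝ) ^ (-(1 : ℝ) / 2) := by
    have := Real.rpow_nonneg hM0 ((3:ℝ)/2)
    have := Real.rpow_nonneg hn0.le (-(1:ℝ)/2)
    positivity
  have hsq : (2 * M ^ ((3 : ℝ) / 2) * δd⁻¹ * (n : ℝ) ^ (-(1 : ℝ) / 2)) ^ 2
      = 4 * M ^ 3 / (δd ^ 2 * n) := by
    have h32 : (M ^ ((3:ℝ)/2)) ^ 2 = M ^ 3 := by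
      rw [← Real.rpow_natCast (M ^ ((3:ℝ)/2)) 2, ← Real.rpow_mul hM0]
      norm_num
    have hn2 : ((n:ℝ) ^ (-(1:ℝ)/2)) ^ 2 = ((n:ℝ))⁻¹ := by
      rw [← Real.rpow_natCast ((n:ℝ) ^ (-(1:ℝ)/2)) 2, ← Real.rpow_mul hn0.le]
      norm_num
      exact Real.rpow_neg_one _
    rw [mul_pow, mul_pow, mul_pow, h32, hn2]
    have hδ0 : δd ≠ 0 := ne_of_gt hδd
    have hnne : (n:ℝ) ≠ 0 := ne_of_gt hn0
    field_simp
    ring_nf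
    try exact Or.inl trivial
  rw [W2]
  calc Real.sqrt _ ≤ Real.sqrt ((2 * M ^ ((3 : ℝ) / 2) * δd⁻¹ * (n : ℝ) ^ (-(1 : ℝ) / 2)) ^ 2) :=
        Real.sqrt_le_sqrt (by rw [hsq]; exact hsInf)
    _ = _ := Real.sqrt_sq hRHS0
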